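/- arXiv:0906.4254 — 3 statements merged into one kernel-verified Lean document; each statement's English description precedes it below -/
import Mathlib

section
/- For Model 1 in dimension d = 1 under the Cramér condition: there exist c > 0, l₀ and r₀ < ∞ such that for all l ≥ l₀ and all r > r₀, P(Y_l ≤ −rl) ≤ l e^{−crl}, where Y_l = min_{x ∈ Ξ_0([0,l])} max_{γ ∈ ℵ_l^x([0,l])} V(γ). -/
/-!
Model 1 (directed last passage percolation, d = 1).  Edges are indexed by
`(x, m, b) : ℤ × ℕ × Bool`, representing the directed edge from the vertex
`(x, m)` to `(x + (if b then 1 else -1), m + 1)`.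
-/

open MeasureTheory ProbabilityTheory Filter

namespace Stmt7

/-- Position of a directed path after `k` steps, starting at `x`,
with step signs `s`. -/
def pos (x : ℤ) (s : ℕ → Bool) : ℕ → ℤ
  | 0 => x
  | k + 1 => pos x s k + (if s k then 1 else -1)

/-- Value `V(γ)` of the directed path starting at `(x, m)`, taking `n` steps
according to `s`, in the edge-weight realization `Y`. -/
noncomputable def pathVal (Y : ℤ × ℕ × Bool → ℝ) (x : ℤ) (m : ℕ) (s : ℕ → Bool) (n : ℕ) : ℝ :=
  ∑ k ∈ Finset.range n, Y (pos x s k, m + k, s k)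

/-- `Y_l = min_{x ∈ Ξ_0([0,l])} max_{γ ∈ ℵ_l^x([0,l])} V(γ)`:
the minimum over starting points `x ∈ Ξ_0([0,l])` (i.e. `0 ≤ x ≤ l`, `x` even)
of the maximal value of a directed path from `(x,0)` to level `l` whose
spatial coordinate stays in `[0,l]`. -/
noncomputable def Yl (Y : ℤ × ℕ × Bool → ℝ) (l : ℕ) : ℝ :=
  ⨅ x : {x : ℤ // 0 ≤ x ∧ x ≤ l ∧ x % 2 = 0},
    ⨆ s : {s : ℕ → Bool // ∀ k ≤ l, 0 ≤ pos x.1 s k ∧ pos x.1 s k ≤ l},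
      pathVal Y x.1 0 s.1 l

end Stmt7

namespace Stmt7

/-- the zig-zag step sequence for start `x` in a box of width `l` -/
def sp (l : ℕ) (x : ℤ) : ℕ → Bool :=
  fun j => if x < (l : ℤ) then decide (j % 2 = 0) else decide (j % 2 = 1)

lemma pos_sp (l : ℕ) (x : ℤ) (k : ℕ) :
    pos x (sp l x) k = x + (if k % 2 = 0 then 0 else if x < (l : ℤ) then 1 else -1) := by
  induction k with
  | zero => simp [pos]
  | succ k ih =>
    rw [pos, ih, sp]
    have h2 : (k + 1) % 2 = 1 - k % 2 := by omega
    rcases Nat.mod_two_eq_zero_or_one k with hk | hk <;>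
      rcases lt_or_ge x (l : ℤ) with hx | hx <;>
      simp [hk, h2, hx, hx.not_gt] <;> ring

lemma sp_valid {l : ℕ} (hl : 1 ≤ l) {x : ℤ} (hx0 : 0 ≤ x) (hxl : x ≤ (l : ℤ)) :
    ∀ k ≤ l, 0 ≤ pos x (sp l x) k ∧ pos x (sp l x) k ≤ (l : ℤ) := by
  intro k _
  rw [pos_sp]
  rcases Nat.mod_two_eq_zero_or_one k with hk | hk <;>
    rcases lt_or_ge x (l : ℤ) with hx | hx <;>
      simp [hk, hx, hx.not_gt] <;> omega

/-- the finite set of edges usable by a path staying in the `[0,l]` box -/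
noncomputable def box (l : ℕ) : Finset (ℤ × ℕ × Bool) :=
  Finset.Icc (0 : ℤ) (l : ℤ) ×ˢ Finset.range l ×ˢ (Finset.univ : Finset Bool)

lemma pathVal_eq_sum_image (Y : ℤ × ℕ × Bool → ℝ) (x : ℤ) (s : ℕ → Bool) (l : ℕ) :
    pathVal Y x 0 s l = ∑ e ∈ (Finset.range l).image (fun k => (pos x s k, k, s k)), Y e := by
  rw [Finset.sum_image (by intro a _ b _ h; exact (Prod.ext_iff.1 (Prod.ext_iff.1 h).2).1)]
  simp [pathVal]

lemma image_subset_box (x : ℤ) (s : ℕ → Bool) (l : ℕ)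
    (hs : ∀ k ≤ l, 0 ≤ pos x s k ∧ pos x s k ≤ (l : ℤ)) :
    (Finset.range l).image (fun k => (pos x s k, k, s k)) ⊆ box l := by
  intro e he
  obtain ⟨k, hk, rfl⟩ := Finset.mem_image.1 he
  rw [Finset.mem_range] at hk
  obtain ⟨h1, h2⟩ := hs k hk.le
  simp [box, Finset.mem_product, h1, h2, hk]

lemma pathVal_le (Y : ℤ × ℕ × Bool → ℝ) (x : ℤ) {l : ℕ} (s : ℕ → Bool)
    (hs : ∀ k ≤ l, 0 ≤ pos x s k ∧ pos x s k ≤ (l : ℤ)) :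
    pathVal Y x 0 s l ≤ ∑ e ∈ box l, |Y e| := by
  rw [pathVal_eq_sum_image]
  refine le_trans (Finset.sum_le_sum fun e _ => le_abs_self _) ?_
  exact Finset.sum_le_sum_of_subset_of_nonneg (image_subset_box x s l hs)
    (fun e _ _ => abs_nonneg _)

lemma mgf_congr_ident {Ω : Type} [MeasurableSpace Ω] {P : Measure Ω} {f g : Ω → ℝ}
    (hf : Measurable f) (hg : Measurable g)
    (h : Measure.map f P = Measure.map g P) (t : ℝ) : mgf f P t = mgf g P t := by
  have hm : AEStronglyMeasurable (fun y : ℝ => Real.exp (t * y)) (Measure.map g P) :=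
    (Real.measurable_exp.comp (measurable_const_mul t)).aestronglyMeasurable
  have e1 : ∫ y, Real.exp (t * y) ∂(Measure.map f P) = ∫ ω, Real.exp (t * f ω) ∂P :=
    integral_map hf.aemeasurable (h ▸ hm)
  have e2 : ∫ y, Real.exp (t * y) ∂(Measure.map g P) = ∫ ω, Real.exp (t * g ω) ∂P :=
    integral_map hg.aemeasurable hm
  show ∫ ω, Real.exp (t * f ω) ∂P = ∫ ω, Real.exp (t * g ω) ∂P
  rw [← e1, ← e2, h]

lemma chernoff {Ω : Type} [MeasurableSpace Ω] (P : Measure Ω) [IsProbabilityMeasure P]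
    (X : ℤ × ℕ × Bool → Ω → ℝ) (hmeas : ∀ e, Measurable (X e))
    (hindep : iIndepFun X P)
    {t : ℝ} (ht : t ≤ 0) (hint : ∀ e, Integrable (fun ω => Real.exp (t * X e ω)) P)
    {K : ℝ} (hK : ∀ e, mgf (X e) P t ≤ K)
    (s : Finset (ℤ × ℕ × Bool)) (ε : ℝ) :
    (P {ω | ∑ e ∈ s, X e ω ≤ ε}).toReal ≤ Real.exp (-t * ε) * K ^ s.card := by
  have hint' : Integrable (fun ω => Real.exp (t * (∑ e ∈ s, X e) ω)) P :=
    hindep.integrable_exp_mul_sum hmeas (fun e _ => hint e)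
  have h1 := measure_le_le_exp_mul_mgf (X := ∑ e ∈ s, X e) ε ht hint'
  have hset : {ω | (∑ e ∈ s, X e) ω ≤ ε} = {ω | ∑ e ∈ s, X e ω ≤ ε} := by
    simp [Finset.sum_apply]
  rw [hset] at h1
  refine h1.trans ?_
  rw [hindep.mgf_sum hmeas s]
  have hprod : ∏ e ∈ s, mgf (X e) P t ≤ K ^ s.card := by
    rw [← Finset.prod_const]
    exact Finset.prod_le_prod (fun e _ => mgf_nonneg) (fun e _ => hK e)
  exact mul_le_mul_of_nonneg_left hprod (Real.exp_nonneg _)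

lemma incl {l : ℕ} (hl : 2 ≤ l) (Y : ℤ × ℕ × Bool → ℝ) (a : ℝ) (h : Yl Y l ≤ a) :
    ∃ k < l, pathVal Y (2 * (k : ℤ)) 0 (sp l (2 * (k : ℤ))) l ≤ a := by
  haveI hfin : Finite {x : ℤ // 0 ≤ x ∧ x ≤ (l : ℤ) ∧ x % 2 = 0} := by
    have hfs : {x : ℤ | 0 ≤ x ∧ x ≤ (l : ℤ) ∧ x % 2 = 0}.Finite :=
      (Set.finite_Icc 0 (l : ℤ)).subset fun x hx => Set.mem_Icc.2 ⟨hx.1, hx.2.1⟩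
    exact hfs.to_subtype
  haveI hne : Nonempty {x : ℤ // 0 ≤ x ∧ x ≤ (l : ℤ) ∧ x % 2 = 0} :=
    ⟨⟨0, le_refl 0, by positivity, by decide⟩⟩
  obtain ⟨x₀, hx₀⟩ := Finite.exists_min
    (fun x : {x : ℤ // 0 ≤ x ∧ x ≤ (l : ℤ) ∧ x % 2 = 0} => pathVal Y x.1 0 (sp l x.1) l)
  have hkey : pathVal Y x₀.1 0 (sp l x₀.1) l ≤ a := by
    refine le_trans (le_ciInf fun x => ?_) h
    refine (hx₀ x).trans ?_
    have hval := sp_valid (by omega) x.2.1 x.2.2.1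
    refine le_ciSup_of_le ?_ ⟨sp l x.1, hval⟩ (le_refl _)
    refine ⟨∑ e ∈ box l, |Y e|, ?_⟩
    rintro y ⟨s, rfl⟩
    exact pathVal_le Y x.1 s.1 s.2
  obtain ⟨x, hx0, hxl, hx2⟩ := x₀
  refine ⟨(x / 2).toNat, by omega, ?_⟩
  have hx : 2 * (((x / 2).toNat : ℤ)) = x := by omega
  rw [hx]
  exact hkey

end Stmt7

open Stmt7

/-- Lemma 2.2.  Under the Cramér condition, there exist
`c > 0`, `l₀` and `r₀ < ∞` such that for all `l ≥ l₀` and all `r > r₀`,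
`P(Y_l ≤ -r l) ≤ l e^{-c r l}`. -/
theorem stmt_7
    {Ω : Type} [MeasurableSpace Ω] (P : Measure Ω) [IsProbabilityMeasure P]
    (X : ℤ × ℕ × Bool → Ω → ℝ)
    (hmeas : ∀ e, Measurable (X e))
    (hindep : iIndepFun X P)
    (hident : ∀ e e', Measure.map (X e) P = Measure.map (X e') P)
    (hmean : ∀ e, ∫ ω, X e ω ∂P = 0)
    (c₀ : ℝ) (hc₀ : 0 < c₀)
    (hcramer : ∀ e, ∀ c : ℝ, |c| < c₀ → Integrable (fun ω => Real.exp (c * X e ω)) P) :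
    ∃ (c : ℝ) (l₀ : ℕ) (r₀ : ℝ), 0 < c ∧
      ∀ l : ℕ, l₀ ≤ l → ∀ r : ℝ, r₀ < r →
        (P {ω | Yl (fun e => X e ω) l ≤ -(r * l)}).toReal ≤
          (l : ℝ) * Real.exp (-(c * r * l)) := by
  classical
  set t : ℝ := -(c₀ / 2) with ht_def
  have ht : t ≤ 0 := by simp [ht_def]; positivity
  have htabs : |t| < c₀ := by
    rw [ht_def, abs_neg, abs_of_pos (by positivity)]; linarith
  have hint : ∀ e, Integrable (fun ω => Real.exp (t * X e ω)) P := fun e => hcramer e t htabs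
  set K : ℝ := max (mgf (X (0, 0, true)) P t) 1 with hK_def
  have hK1 : (1 : ℝ) ≤ K := le_max_right _ _
  have hKpos : (0 : ℝ) < K := lt_of_lt_of_le one_pos hK1
  have hK : ∀ e, mgf (X e) P t ≤ K := fun e =>
    (mgf_congr_ident (hmeas e) (hmeas (0, 0, true)) (hident e (0, 0, true)) t).le.trans
      (le_max_left _ _)
  refine ⟨c₀ / 4, 2, max ((4 / c₀) * Real.log K) 0, by positivity, ?_⟩
  intro l hl r hr
  have hrK : (4 / c₀) * Real.log K ≤ r := le_of_lt (lt_of_le_of_lt (le_max_left _ _) hr)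
  have hr0 : 0 ≤ r := le_of_lt (lt_of_le_of_lt (le_max_right _ _) hr)
  set ε : ℝ := -(r * l) with hε_def
  set A : ℕ → Set Ω := fun k =>
    {ω | pathVal (fun e => X e ω) (2 * (k : ℤ)) 0 (sp l (2 * (k : ℤ))) l ≤ ε} with hA_def
  have hsub : {ω | Yl (fun e => X e ω) l ≤ ε} ⊆ ⋃ k ∈ Finset.range l, A k := by
    intro ω hω
    obtain ⟨k, hk, hle⟩ := incl hl (fun e => X e ω) ε hω
    exact Set.mem_biUnion (Finset.mem_range.2 hk) hle
  have h2 : P {ω | Yl (fun e => X e ω) l ≤ ε} ≤ ∑ k ∈ Finset.range l, P (A k) :=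
    (measure_mono hsub).trans (measure_biUnion_finset_le _ _)
  have h3 : ∀ k, (P (A k)).toReal ≤ Real.exp (-t * ε) * K ^ l := by
    intro k
    set x : ℤ := 2 * (k : ℤ)
    set s : Finset (ℤ × ℕ × Bool) :=
      (Finset.range l).image (fun j => (pos x (sp l x) j, j, sp l x j)) with hs_def
    have hcard : s.card = l := by
      rw [hs_def, Finset.card_image_of_injOn, Finset.card_range]
      intro a _ b _ h
      exact (Prod.ext_iff.1 (Prod.ext_iff.1 h).2).1
    have hAk : A k = {ω | ∑ e ∈ s, X e ω ≤ ε} := by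
      ext ω
      simp only [hA_def, Set.mem_setOf_eq]
      rw [pathVal_eq_sum_image]
    rw [hAk, ← hcard]
    exact chernoff P X hmeas hindep ht hint hK s ε
  have hptop : ∀ k, k ∈ Finset.range l → P (A k) ≠ ⊤ := fun k _ => measure_ne_top P _
  have h4 : (P {ω | Yl (fun e => X e ω) l ≤ ε}).toReal ≤
      ∑ k ∈ Finset.range l, (P (A k)).toReal := by
    rw [← ENNReal.toReal_sum hptop]
    exact ENNReal.toReal_mono (ENNReal.sum_ne_top.2 hptop) h2
  have h5 : ∑ k ∈ Finset.range l, (P (A k)).toReal ≤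
      (l : ℝ) * (Real.exp (-t * ε) * K ^ l) := by
    have := Finset.sum_le_card_nsmul (Finset.range l) (fun k => (P (A k)).toReal)
      (Real.exp (-t * ε) * K ^ l) (fun k _ => h3 k)
    rwa [Finset.card_range, nsmul_eq_mul] at this
  have h6 : Real.exp (-t * ε) * K ^ l ≤ Real.exp (-(c₀ / 4 * r * l)) := by
    have hKl : K ^ l = Real.exp ((l : ℝ) * Real.log K) := by
      rw [Real.exp_nat_mul, Real.exp_log hKpos]
    rw [hKl, ← Real.exp_add, Real.exp_le_exp]
    have hlog0 : 0 ≤ Real.log K := Real.log_nonneg hK1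
    have hlog : Real.log K ≤ c₀ / 4 * r := by
      have := mul_le_mul_of_nonneg_left hrK (le_of_lt (show (0:ℝ) < c₀ / 4 by positivity))
      calc Real.log K = c₀ / 4 * ((4 / c₀) * Real.log K) := by field_simp
        _ ≤ c₀ / 4 * r := this
    have hlmul : (l : ℝ) * Real.log K ≤ (l : ℝ) * (c₀ / 4 * r) :=
      mul_le_mul_of_nonneg_left hlog (Nat.cast_nonneg l)
    rw [ht_def, hε_def]
    nlinarith [Nat.cast_nonneg (α := ℝ) l]
  calc (P {ω | Yl (fun e => X e ω) l ≤ ε}).toReal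
      ≤ (l : ℝ) * (Real.exp (-t * ε) * K ^ l) := h4.trans h5
    _ ≤ (l : ℝ) * Real.exp (-(c₀ / 4 * r * l)) :=
        mul_le_mul_of_nonneg_left h6 (Nat.cast_nonneg l)
end

section
/- Let {X_e} be i.i.d. standard Gaussian N(0,1) random variables on the edge sets T_0, T_1, … with |T_k| ≤ 2^{2k+1}, and V_k^- = Σ_{e∈T_k} X_e^-. There is a constant c > 0 such that for any ε > 0 and δ > 0 with 2⁷δ < ε, for all N sufficiently large, P(Σ_{k=0}^{N+log δ} 2^{−k}V_k^- ≥ ε·2^N) ≤ e^{−cε²2^{2N}/N}. -/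
/-!
The shells `T_k` of edges of Model 1 (`d = 1`): `T_k` is a finite set of edges
with `|T_k| ≤ 2^{2k+1}`, the `T_k` pairwise disjoint, and the weights `{X_e}`
are i.i.d. `N(0,1)`.  `V_k^- = Σ_{e ∈ T_k} X_e^-`.
-/

open MeasureTheory ProbabilityTheory Filter

namespace Stmt15

/-- `V_k^- = Σ_{e ∈ T_k} X_e^-`. -/
noncomputable def Vneg {E : Type} (T : ℕ → Finset E) (X : E → Ω → ℝ) (k : ℕ) (ω : Ω) : ℝ :=
  ∑ e ∈ T k, max (-(X e ω)) 0

end Stmt15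

open Stmt15

section Aux
open Real
open scoped ENNReal NNReal

lemma gauss_int (g : ℝ → ℝ) :
    ∫ x, g x ∂(gaussianReal 0 1) = ∫ x, gaussianPDFReal 0 1 x * g x := by
  rw [gaussianReal_of_var_ne_zero 0 one_ne_zero]
  have h : (gaussianPDF 0 1) = fun x => ((gaussianPDFReal 0 1 x).toNNReal : ℝ≥0∞) := rfl
  rw [h, integral_withDensity_eq_integral_smul
    (by exact (measurable_gaussianPDFReal 0 1).real_toNNReal) g]
  congr 1; funext x
  simp [NNReal.smul_def, Real.coe_toNNReal _ (gaussianPDFReal_nonneg 0 1 x)]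

lemma gauss_integrable_iff (g : ℝ → ℝ) :
    Integrable g (gaussianReal 0 1) ↔
      Integrable (fun x => gaussianPDFReal 0 1 x * g x) volume := by
  rw [gaussianReal_of_var_ne_zero 0 one_ne_zero]
  have h : (gaussianPDF 0 1) = fun x => ((gaussianPDFReal 0 1 x).toNNReal : ℝ≥0∞) := rfl
  have h2 : (fun x => gaussianPDFReal 0 1 x * g x)
      = fun x => (gaussianPDFReal 0 1 x).toNNReal • g x := by
    funext x
    simp [NNReal.smul_def, Real.coe_toNNReal _ (gaussianPDFReal_nonneg 0 1 x)]
  rw [h, h2]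
  exact (integrable_withDensity_iff_integrable_smul (μ := volume) (g := g)
    ((measurable_gaussianPDFReal 0 1).real_toNNReal))

lemma pdf_mul_exp (s x : ℝ) :
    gaussianPDFReal 0 1 x * Real.exp (-(s * x)) =
      Real.exp (s^2/2) * gaussianPDFReal 0 1 (x + s) := by
  simp only [gaussianPDFReal, NNReal.coe_one, mul_one, sub_zero]
  rw [mul_assoc, ← Real.exp_add, mul_comm (Real.exp (s^2/2)), mul_assoc, ← Real.exp_add]
  congr 1; ring

lemma pdf_le_one (x : ℝ) : gaussianPDFReal 0 1 x ≤ 1 := by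
  simp only [gaussianPDFReal, NNReal.coe_one, mul_one, sub_zero]
  have h1 : (1:ℝ) ≤ Real.sqrt (2 * π) := by
    rw [show (1:ℝ) = Real.sqrt 1 by simp]
    exact Real.sqrt_le_sqrt (by nlinarith [Real.pi_gt_three])
  have h2 : Real.exp (-x ^ 2 / 2) ≤ 1 := by
    rw [Real.exp_le_one_iff]; nlinarith [sq_nonneg x]
  have h3 : (Real.sqrt (2 * π))⁻¹ ≤ 1 := by
    rw [inv_le_one_iff₀]; right; exact h1
  calc (Real.sqrt (2 * π))⁻¹ * Real.exp (-x ^ 2 / 2) ≤ 1 * 1 := by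
        apply mul_le_mul h3 h2 (Real.exp_nonneg _) zero_le_one
    _ = 1 := by ring

lemma gauss_mgf_neg_part {s : ℝ} (hs : 0 ≤ s) :
    (∫ x, Real.exp (s * max (-x) 0) ∂(gaussianReal 0 1)) ≤ Real.exp (s^2/2 + s) ∧
      Integrable (fun x => Real.exp (s * max (-x) 0)) (gaussianReal 0 1) := by
  set f0 : ℝ → ℝ := gaussianPDFReal 0 1 with hf0
  set h : ℝ → ℝ := fun x => f0 x * Real.exp (s * max (-x) 0) with hh
  have I0 : Integrable f0 volume := integrable_gaussianPDFReal 0 1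
  have I1 : Integrable (fun x => f0 x * Real.exp (-(s * x))) volume := by
    have : (fun x => f0 x * Real.exp (-(s * x)))
        = fun x => Real.exp (s^2/2) * gaussianPDFReal 0 1 (x + s) := by
      funext x; exact pdf_mul_exp s x
    rw [this]
    exact (((integrable_gaussianPDFReal 0 1).comp_add_right s)).const_mul _
  have hmeas_h : Measurable h := by
    apply (measurable_gaussianPDFReal 0 1).mul
    exact (((measurable_neg.max measurable_const).const_mul s)).exp
  have hbound : ∀ x, ‖h x‖ ≤ f0 x * Real.exp (-(s * x)) + f0 x := by
    intro x
    have hf0n : 0 ≤ f0 x := gaussianPDFReal_nonneg 0 1 x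
    rw [Real.norm_eq_abs, abs_of_nonneg (by positivity)]
    rcases le_or_gt x 0 with hx | hx
    · have hxv : max (-x) 0 = -x := max_eq_left (by linarith)
      simp only [hh, hxv, mul_neg, ← neg_mul]
      nlinarith [Real.exp_pos (-(s * x))]
    · have hxv : max (-x) 0 = 0 := max_eq_right (by linarith)
      simp only [hh, hxv, mul_zero, Real.exp_zero, mul_one]
      nlinarith [Real.exp_pos (-(s * x))]
  have Ih : Integrable h volume :=
    (I1.add I0).mono' hmeas_h.aestronglyMeasurable (Filter.Eventually.of_forall hbound)
  have hIic : ∫ x in Set.Iic (0:ℝ), h x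
      = Real.exp (s^2/2) * ∫ x in Set.Iic (0:ℝ), f0 (x + s) := by
    rw [← MeasureTheory.integral_const_mul]
    apply setIntegral_congr_fun measurableSet_Iic
    intro x hx
    have hx0 : x ≤ 0 := hx
    have hxv : max (-x) 0 = -x := max_eq_left (by linarith)
    simp only [hh, hxv, mul_neg]
    exact pdf_mul_exp s x
  have htrans : ∫ x in Set.Iic (0:ℝ), f0 (x + s) = ∫ x in Set.Iic s, f0 x := by
    rw [← integral_indicator measurableSet_Iic, ← integral_indicator measurableSet_Iic]
    have hfun : (Set.indicator (Set.Iic (0:ℝ)) fun x => f0 (x + s))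
        = fun x => Set.indicator (Set.Iic s) f0 (x + s) := by
      funext x
      simp [Set.indicator_apply, Set.mem_Iic, add_le_iff_nonpos_left]
    rw [hfun]
    exact integral_add_right_eq_self (Set.indicator (Set.Iic s) f0) s
  have hIoi : ∫ x in Set.Ioi (0:ℝ), h x = ∫ x in Set.Ioi (0:ℝ), f0 x := by
    apply setIntegral_congr_fun measurableSet_Ioi
    intro x hx
    have hx0 : (0:ℝ) < x := hx
    have hxv : max (-x) 0 = 0 := max_eq_right (by linarith)
    simp only [hh, hxv, mul_zero, Real.exp_zero, mul_one]
  set A : ℝ := ∫ x in Set.Iic (0:ℝ), f0 x with hA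
  have htot : A + ∫ x in Set.Ioi (0:ℝ), f0 x = 1 := by
    rw [hA, ← Set.compl_Iic]
    rw [integral_add_compl measurableSet_Iic I0]
    exact integral_gaussianPDFReal_eq_one 0 one_ne_zero
  have hA0 : 0 ≤ A := setIntegral_nonneg measurableSet_Iic
    fun x _ => gaussianPDFReal_nonneg 0 1 x
  have hB0 : 0 ≤ ∫ x in Set.Ioi (0:ℝ), f0 x := setIntegral_nonneg measurableSet_Ioi
    fun x _ => gaussianPDFReal_nonneg 0 1 x
  have hIocle : ∫ x in Set.Ioc (0:ℝ) s, f0 x ≤ s := by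
    have hnorm := norm_setIntegral_le_of_norm_le_const (C := 1) (μ := volume)
      (s := Set.Ioc (0:ℝ) s) (f := f0) (by rw [Real.volume_Ioc]; exact ENNReal.ofReal_lt_top)
      (fun x _ => by rw [Real.norm_eq_abs, abs_of_nonneg (gaussianPDFReal_nonneg 0 1 x)]
                     exact pdf_le_one x)
    rw [Real.volume_real_Ioc_of_le hs, one_mul] at hnorm
    calc ∫ x in Set.Ioc (0:ℝ) s, f0 x ≤ |∫ x in Set.Ioc (0:ℝ) s, f0 x| := le_abs_self _
      _ ≤ s - 0 := hnorm
      _ = s := by ring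
  have hD : ∫ x in Set.Iic s, f0 x ≤ A + s := by
    rw [← Set.Iic_union_Ioc_eq_Iic hs,
      setIntegral_union (Set.Iic_disjoint_Ioc le_rfl) measurableSet_Ioc
        I0.integrableOn I0.integrableOn]
    exact add_le_add le_rfl hIocle
  have hE : ∫ x, Real.exp (s * max (-x) 0) ∂(gaussianReal 0 1) = ∫ x, h x := by
    rw [gauss_int]
  refine ⟨?_, (gauss_integrable_iff _).2 Ih⟩
  rw [hE, ← integral_add_compl measurableSet_Iic Ih, Set.compl_Iic, hIic, htrans, hIoi]
  have hexp1 : (1:ℝ) ≤ Real.exp (s^2/2) := by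
    rw [Real.one_le_exp_iff]; positivity
  have hexps : 1 + s ≤ Real.exp s := by
    have := Real.add_one_le_exp s; linarith
  have hABle : A ≤ 1 := by linarith
  rw [Real.exp_add]
  have hBeq : ∫ x in Set.Ioi (0:ℝ), f0 x = 1 - A := by linarith
  rw [hBeq]
  nlinarith [Real.exp_pos (s^2/2), mul_le_mul_of_nonneg_left hD (Real.exp_nonneg (s^2/2)),
    mul_le_mul_of_nonneg_left hexps (Real.exp_nonneg (s^2/2))]

end Aux

/-- Lemma 3.4.  With `{X_e}` i.i.d. `N(0,1)` on the pairwise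
disjoint shells `T_k`, `|T_k| ≤ 2^{2k+1}`: there is `c > 0` such that for all
`ε > 0` and `δ = 2^{-m} > 0` (with `log₂ δ` an integer) satisfying `2⁷ δ < ε`,
for all `N` sufficiently large,
`P(Σ_{k=0}^{N + log₂ δ} 2^{-k} V_k^- ≥ ε 2^N) ≤ e^{-c ε² 2^{2N}/N}`. -/
theorem stmt_15
    {Ω : Type} [MeasurableSpace Ω] (P : Measure Ω) [IsProbabilityMeasure P]
    {E : Type} (T : ℕ → Finset E)
    (hcard : ∀ k, (T k).card ≤ 2 ^ (2 * k + 1))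
    (hdisj : ∀ k k', k ≠ k' → Disjoint (T k) (T k'))
    (X : E → Ω → ℝ)
    (hmeas : ∀ e, Measurable (X e))
    (hindep : iIndepFun X P)
    (hdist : ∀ e, Measure.map (X e) P = gaussianReal 0 1) :
    ∃ c > (0 : ℝ), ∀ (ε δ : ℝ) (m : ℕ), 0 < ε → δ = (2 : ℝ) ^ (-(m : ℤ)) →
      2 ^ 7 * δ < ε →
      ∃ N₀ : ℕ, ∀ N : ℕ, N₀ ≤ N →
        (P {ω | ε * 2 ^ N ≤
            ∑ k ∈ Finset.range (N - m + 1), (2 : ℝ) ^ (-(k : ℤ)) * Vneg T X k ω}).toReal ≤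
          Real.exp (-(c * ε ^ 2 * 2 ^ (2 * N)) / N) := by
  classical
  refine ⟨1/16, by norm_num, ?_⟩
  intro ε δ m hε hδ hlt
  refine ⟨m + 1, ?_⟩
  intro N hN
  have hNm : m ≤ N := le_trans (Nat.le_succ m) hN
  have hN1 : 1 ≤ N := le_trans (Nat.le_add_left 1 m) hN
  set K := N - m + 1 with hK
  set a : E → ℝ := fun e => ∑ k ∈ Finset.range K, if e ∈ T k then (2:ℝ)^(-(k:ℤ)) else 0
    with hadef
  have ha_nonneg : ∀ e, 0 ≤ a e := fun e => Finset.sum_nonneg (fun k _ => by positivity)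
  have ha : ∀ k ∈ Finset.range K, ∀ e ∈ T k, a e = (2:ℝ)^(-(k:ℤ)) := by
    intro k hk e he
    simp only [hadef]
    rw [Finset.sum_eq_single_of_mem k hk]
    · rw [if_pos he]
    · intro j hj hjk
      rw [if_neg]
      intro hej
      exact (Finset.disjoint_left.1 (hdisj j k hjk) hej) he
  set U : Finset E := (Finset.range K).biUnion T with hU
  have hdisjU : (↑(Finset.range K) : Set ℕ).PairwiseDisjoint T :=
    fun k _ k' _ hkk' => hdisj k k' hkk'
  set Y : E → Ω → ℝ := fun e => (fun x : ℝ => a e * max (-x) 0) ∘ X e with hYdef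
  have hYmeas : ∀ e, Measurable (Y e) :=
    fun e => ((measurable_neg.max measurable_const).const_mul (a e)).comp (hmeas e)
  have hsum : ∀ ω, ∑ k ∈ Finset.range K, (2:ℝ)^(-(k:ℤ)) * Vneg T X k ω = ∑ e ∈ U, Y e ω := by
    intro ω
    rw [hU, Finset.sum_biUnion hdisjU]
    refine Finset.sum_congr rfl fun k hk => ?_
    rw [Vneg, Finset.mul_sum]
    exact Finset.sum_congr rfl fun e he => by
      rw [hYdef]; simp only [Function.comp]; rw [ha k hk e he]
  have hN1R : (1:ℝ) ≤ (N:ℝ) := by exact_mod_cast hN1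
  set t : ℝ := ε * 2^N / (4 * ((N:ℝ)+1)) with ht
  have htpos : 0 < t := by
    apply div_pos (by positivity) (by positivity)
  have hYindep : iIndepFun Y P :=
    hindep.comp (fun e => fun x : ℝ => a e * max (-x) 0)
      (fun e => (measurable_neg.max measurable_const).const_mul (a e))
  have hedge : ∀ e ∈ U, Integrable (fun ω => Real.exp (t * Y e ω)) P ∧
      mgf (Y e) P t ≤ Real.exp ((t * a e)^2/2 + t * a e) := by
    intro e _
    have hse : 0 ≤ t * a e := mul_nonneg htpos.le (ha_nonneg e)
    have hcomp : (fun ω => Real.exp (t * Y e ω))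
        = (fun x => Real.exp ((t * a e) * max (-x) 0)) ∘ X e := by
      funext ω
      simp only [hYdef, Function.comp]
      ring_nf
    have hgm : AEStronglyMeasurable (fun x => Real.exp ((t * a e) * max (-x) 0))
        (Measure.map (X e) P) :=
      (((measurable_neg.max measurable_const).const_mul _).exp).aestronglyMeasurable
    have hint : Integrable (fun ω => Real.exp (t * Y e ω)) P := by
      rw [hcomp, ← integrable_map_measure hgm (hmeas e).aemeasurable, hdist e]
      exact (gauss_mgf_neg_part hse).2
    refine ⟨hint, ?_⟩
    have hmgf_eq : mgf (Y e) P t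
        = ∫ x, Real.exp ((t * a e) * max (-x) 0) ∂(gaussianReal 0 1) := by
      rw [mgf, ← hdist e, integral_map (hmeas e).aemeasurable hgm]
      exact congrArg (∫ ω, · ω ∂P) hcomp.symm ▸ rfl
    rw [hmgf_eq]
    exact (gauss_mgf_neg_part hse).1
  have hintS : Integrable (fun ω => Real.exp (t * (∑ e ∈ U, Y e) ω)) P :=
    hYindep.integrable_exp_mul_sum hYmeas (fun e he => (hedge e he).1)
  have hcher := measure_ge_le_exp_mul_mgf (μ := P) (X := ∑ e ∈ U, Y e) (ε * 2^N) htpos.le hintS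
  have hmgfS : mgf (∑ e ∈ U, Y e) P t ≤ Real.exp (∑ e ∈ U, ((t * a e)^2/2 + t * a e)) := by
    rw [hYindep.mgf_sum hYmeas, Real.exp_sum]
    exact Finset.prod_le_prod (fun e _ => mgf_nonneg) (fun e he => (hedge e he).2)
  have hUsum : ∀ φ : ℝ → ℝ, ∑ e ∈ U, φ (a e)
      = ∑ k ∈ Finset.range K, ((T k).card : ℝ) * φ ((2:ℝ)^(-(k:ℤ))) := by
    intro φ
    rw [hU, Finset.sum_biUnion hdisjU]
    refine Finset.sum_congr rfl fun k hk => ?_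
    rw [Finset.sum_congr rfl (fun e he => by rw [ha k hk e he]), Finset.sum_const,
      nsmul_eq_mul]
  have hzpow : ∀ k : ℕ, (2:ℝ)^(-(k:ℤ)) = ((2:ℝ)^k)⁻¹ := by
    intro k
    rw [zpow_neg, zpow_natCast]
  have hsq : ∑ e ∈ U, (a e)^2 ≤ 2 * K := by
    rw [hUsum (fun x => x^2)]
    calc ∑ k ∈ Finset.range K, ((T k).card : ℝ) * ((2:ℝ)^(-(k:ℤ)))^2
        ≤ ∑ k ∈ Finset.range K, (2:ℝ) := by
          apply Finset.sum_le_sum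
          intro k _
          have h1 : ((T k).card : ℝ) ≤ (2:ℝ)^(2*k+1) := by
            exact_mod_cast (Nat.cast_le.2 (hcard k)).trans_eq (by push_cast; ring)
          have h2 : (0:ℝ) ≤ ((2:ℝ)^(-(k:ℤ)))^2 := by positivity
          calc ((T k).card : ℝ) * ((2:ℝ)^(-(k:ℤ)))^2
              ≤ (2:ℝ)^(2*k+1) * ((2:ℝ)^(-(k:ℤ)))^2 := by
                exact mul_le_mul_of_nonneg_right h1 h2
            _ = 2 := by
                rw [hzpow k, pow_add, pow_mul, pow_one]
                have : ((2:ℝ)^k) ≠ 0 := by positivity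
                field_simp
                rw [← pow_mul, ← pow_mul]
                ring
      _ = 2 * K := by rw [Finset.sum_const, Finset.card_range, nsmul_eq_mul]; ring
  have hlin : ∑ e ∈ U, a e ≤ (2:ℝ)^(K+1) := by
    rw [hUsum (fun x => x)]
    calc ∑ k ∈ Finset.range K, ((T k).card : ℝ) * ((2:ℝ)^(-(k:ℤ)))
        ≤ ∑ k ∈ Finset.range K, (2:ℝ)^(k+1) := by
          apply Finset.sum_le_sum
          intro k _
          have h1 : ((T k).card : ℝ) ≤ (2:ℝ)^(2*k+1) := by
            exact_mod_cast (Nat.cast_le.2 (hcard k)).trans_eq (by push_cast; ring)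
          have h2 : (0:ℝ) ≤ ((2:ℝ)^(-(k:ℤ))) := by positivity
          calc ((T k).card : ℝ) * ((2:ℝ)^(-(k:ℤ)))
              ≤ (2:ℝ)^(2*k+1) * ((2:ℝ)^(-(k:ℤ))) := mul_le_mul_of_nonneg_right h1 h2
            _ = (2:ℝ)^(k+1) := by
                rw [hzpow k]
                have : ((2:ℝ)^k) ≠ 0 := by positivity
                rw [show 2*k+1 = (k+1)+k by ring, pow_add]
                field_simp
      _ ≤ (2:ℝ)^(K+1) := by
          induction K with
          | zero => simp
          | succ n ih =>
            rw [Finset.sum_range_succ]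
            calc (∑ k ∈ Finset.range n, (2:ℝ)^(k+1)) + 2^(n+1)
                ≤ (2:ℝ)^(n+1) + 2^(n+1) := by linarith [ih]
              _ = 2^(n+2) := by ring
  have hseteq : {ω | ε * 2 ^ N ≤ ∑ k ∈ Finset.range K, (2:ℝ)^(-(k:ℤ)) * Vneg T X k ω}
      = {ω | ε * 2 ^ N ≤ (∑ e ∈ U, Y e) ω} := by
    ext ω
    simp only [Set.mem_setOf_eq, Finset.sum_apply]
    rw [hsum ω]
  have hsplit : ∑ e ∈ U, ((t * a e)^2/2 + t * a e)
      = t^2/2 * (∑ e ∈ U, (a e)^2) + t * (∑ e ∈ U, a e) := by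
    rw [Finset.mul_sum, Finset.mul_sum, ← Finset.sum_add_distrib]
    exact Finset.sum_congr rfl fun e _ => by ring
  have hδval : δ = ((2:ℝ)^m)⁻¹ := by rw [hδ, zpow_neg, zpow_natCast]
  have hpowK : (2:ℝ)^(K+1) = 2^(N+2) * δ := by
    rw [hδval]
    have hm : K + 1 + m = N + 2 := by omega
    rw [eq_mul_inv_iff_mul_eq₀ (by positivity), ← pow_add, hm]
  have hδlt : δ < ε/128 := by
    norm_num at hlt
    linarith
  have hpowKle : (2:ℝ)^(K+1) ≤ ε * 2^N / 32 := by
    rw [hpowK]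
    calc (2:ℝ)^(N+2) * δ ≤ 2^(N+2) * (ε/128) :=
          mul_le_mul_of_nonneg_left hδlt.le (by positivity)
      _ = ε * 2^N / 32 := by rw [pow_add]; ring
  have hKleR : (K:ℝ) ≤ (N:ℝ) + 1 := by
    have h : K ≤ N + 1 := by omega
    exact_mod_cast h
  have hQt : ε * 2^N = 4 * ((N:ℝ)+1) * t := by
    rw [ht]
    field_simp
  have hRpos : (0:ℝ) < (N:ℝ) := by linarith
  calc (P {ω | ε * 2 ^ N ≤ ∑ k ∈ Finset.range K, (2:ℝ)^(-(k:ℤ)) * Vneg T X k ω}).toReal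
      = (P {ω | ε * 2 ^ N ≤ (∑ e ∈ U, Y e) ω}).toReal := by rw [hseteq]
    _ ≤ Real.exp (-t * (ε * 2 ^ N)) * mgf (∑ e ∈ U, Y e) P t := hcher
    _ ≤ Real.exp (-t * (ε * 2 ^ N)) * Real.exp (∑ e ∈ U, ((t * a e)^2/2 + t * a e)) :=
        mul_le_mul_of_nonneg_left hmgfS (Real.exp_nonneg _)
    _ = Real.exp (-t * (ε * 2 ^ N) + ∑ e ∈ U, ((t * a e)^2/2 + t * a e)) :=
        (Real.exp_add _ _).symm
    _ ≤ Real.exp (-(1/16 * ε ^ 2 * 2 ^ (2 * N)) / N) := by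
        rw [Real.exp_le_exp, hsplit]
        have hS1 : t^2/2 * (∑ e ∈ U, (a e)^2) ≤ t^2/2 * (2*(K:ℝ)) :=
          mul_le_mul_of_nonneg_left hsq (by positivity)
        have hS2 : t * (∑ e ∈ U, a e) ≤ t * (ε * 2^N / 32) :=
          mul_le_mul_of_nonneg_left (hlin.trans hpowKle) htpos.le
        have h2N : (2:ℝ) ^ (2 * N) = ((2:ℝ)^N)^2 := by
          rw [mul_comm 2 N, pow_mul]
        rw [h2N]
        have hmain : -t * (ε * 2 ^ N) + (t^2/2 * (2*(K:ℝ)) + t * (ε * 2^N / 32))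
            ≤ -(1/16 * ε ^ 2 * ((2:ℝ)^N)^2) / N := by
          have hA : -t * (ε * 2 ^ N) + (t^2/2 * (2*(K:ℝ)) + t * (ε * 2^N / 32))
              = -4*((N:ℝ)+1)*t^2 + t^2*(K:ℝ) + ((N:ℝ)+1)*t^2/8 := by
            rw [hQt]; ring
          have hB : -(1/16 * ε ^ 2 * ((2:ℝ)^N)^2) / (N:ℝ)
              = -(((N:ℝ)+1)^2*t^2)/(N:ℝ) := by
            rw [show -(1/16 * ε ^ 2 * ((2:ℝ)^N)^2) = -(1/16*(ε*2^N)^2) from by ring, hQt]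
            ring
          rw [hA, hB, le_div_iff₀ hRpos]
          have h1 : t^2*(K:ℝ)*(N:ℝ) ≤ t^2*((N:ℝ)+1)*(N:ℝ) :=
            mul_le_mul_of_nonneg_right
              (mul_le_mul_of_nonneg_left hKleR (sq_nonneg t)) hRpos.le
          have h2 : 0 ≤ t^2*((N:ℝ)+1)*(15*(N:ℝ)-8) :=
            mul_nonneg (mul_nonneg (sq_nonneg t) (by linarith)) (by linarith)
          nlinarith [h1, h2]
        linarith [hS1, hS2, hmain]
end

section
/- For Model 1 in dimension d = 1, assume the negative-part tail P(X_e^- > x) = e^{−x²f(x)} for x ≥ M₀ with f positive and increasing, and assume Σ_{k=1}^∞ 1/f(2^k) < ∞. Then for every ε > 0 there exist ε₁ = ε₁(ε) > 0 and δ of the form 2^{−l} (l a positive integer) with Σ_{k=−log δ}^∞ 2^{−k/2} ≤ ε₁/8, such that with I_{N+log δ} = {v = (v₁,…,v_{N+log δ}) ∈ ℤ₊^{N+log δ} : Σ_{k=1}^{N+log δ} 2^{−v_k} ≥ ε₁} and A(v) = ⋂_{k=1}^{N+log δ} B_k(v_k), one has P(⋃_{v ∈ I_{N+log δ}} A(v))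 ≤ e^{−C·2^{2N}} for some constant C = C(ε) > 0 not depending on N (for all N sufficiently large). -/
/-!
The shells `T_k` of edges of Model 1 (`d = 1`): `T_k` is a finite set of edges
with `|T_k| ≤ 2^{2k+1}`, pairwise disjoint; the weights `{X_e}` are i.i.d.
mean-zero with negative-part tail `P(X_e⁻ > x) = e^{-x² f(x)}` for `x ≥ M₀`.
`V_k^- = Σ_{e ∈ T_k} X_e^-` and `B_k(v) = {2^{-k} V_k^- ∈ [2^{N-v}, 2^{N-v+1})}`.
With `δ = 2^{-l}`, a vector `v = (v_1, …, v_{N + log₂ δ})` of nonnegative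
integers (indexed here by `Fin (N - l)`, entry `k` standing for `v_{k+1}`)
belongs to `I_{N + log₂ δ}` when `Σ_k 2^{-v_k} ≥ ε₁`, and
`A(v) = ⋂_{k=1}^{N + log₂ δ} B_k(v_k)`.
-/

open MeasureTheory ProbabilityTheory Filter

namespace Stmt18

/-- `V_k^- = Σ_{e ∈ T_k} X_e^-`. -/
noncomputable def Vneg {E : Type} (T : ℕ → Finset E) (X : E → Ω → ℝ) (k : ℕ) (ω : Ω) : ℝ :=
  ∑ e ∈ T k, max (-(X e ω)) 0

/-- The event `B_k(v) = {2^{-k} V_k^- ∈ [2^{N-v}, 2^{N-v+1})}`. -/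
def Bevent {E : Type} (T : ℕ → Finset E) (X : E → Ω → ℝ) (N k v : ℕ) : Set Ω :=
  {ω | (2 : ℝ) ^ (-(k : ℤ)) * Vneg T X k ω ∈
    Set.Ico ((2 : ℝ) ^ ((N : ℤ) - (v : ℤ))) ((2 : ℝ) ^ ((N : ℤ) - (v : ℤ) + 1))}

/-- The union `⋃_{v ∈ I_{N+log δ}} A(v)`: for some vector
`v : Fin (N - l) → ℕ` with `Σ_k 2^{-v_k} ≥ ε₁`, all the events
`B_k(v_k)`, `k = 1, …, N - l`, occur. -/
def AunionEvent {E : Type} (T : ℕ → Finset E) (X : E → Ω → ℝ)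
    (N l : ℕ) (ε₁ : ℝ) : Set Ω :=
  {ω | ∃ v : Fin (N - l) → ℕ,
    ε₁ ≤ ∑ k, (2 : ℝ) ^ (-(v k : ℤ)) ∧
    ∀ k : Fin (N - l), ω ∈ Bevent T X N (k.1 + 1) (v k)}

end Stmt18

open Stmt18

private lemma pow2_le (a m b : ℕ) (h : a + m ≤ b) : (2:ℝ)^a ≤ 2^b * (1/2)^m := by
  have h2 : (2:ℝ)^(b-m) * 2^m = 2^b := by rw [← pow_add]; congr 1; omega
  have key : (2:ℝ)^b * (1/2)^m = 2^(b-m) := by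
    rw [one_div, inv_pow, ← h2, mul_assoc, mul_inv_cancel₀ (pow_ne_zero m two_ne_zero), mul_one]
  rw [key]
  exact pow_le_pow_right₀ one_le_two (by omega)


private lemma sum_half_index {g : ℕ → ℝ} (hg : ∀ m, 0 ≤ g m) (n : ℕ) :
    ∑ j ∈ Finset.range n, g (j / 2) ≤ 2 * ∑ m ∈ Finset.range n, g m := by
  have key : ∀ m : ℕ, ∑ j ∈ Finset.range (2 * m), g (j / 2)
      = 2 * ∑ i ∈ Finset.range m, g i := by
    intro m
    induction m with
    | zero => simp
    | succ m ih =>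
        have h2 : 2 * (m + 1) = (2 * m) + 1 + 1 := by ring
        rw [h2, Finset.sum_range_succ, Finset.sum_range_succ, ih, Finset.sum_range_succ]
        have e1 : (2 * m) / 2 = m := by omega
        have e2 : (2 * m + 1) / 2 = m := by omega
        rw [e1, e2]; ring
  calc ∑ j ∈ Finset.range n, g (j / 2)
      ≤ ∑ j ∈ Finset.range (2 * n), g (j / 2) := by
        apply Finset.sum_le_sum_of_subset_of_nonneg
        · exact Finset.range_subset_range.2 (by omega)
        · intros; exact hg _
    _ = 2 * ∑ m ∈ Finset.range n, g m := key n

private lemma Afun_spec (M₀ : ℝ) (hM₀ : 0 < M₀) (f : ℝ → ℝ) (hfpos : ∀ x, 0 < f x)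
    (hfmono : Monotone f) (t : ℝ) (ht : 0 ≤ t) :
    ∀ x, M₀ + Real.sqrt (t+1) + (t+1) / f (Real.sqrt (t+1)) ≤ x → t + 1 ≤ x * f x := by
  intro x hx
  set s := Real.sqrt (t+1) with hsdef
  have hs : 0 ≤ s := Real.sqrt_nonneg _
  have hfs : 0 < f s := hfpos s
  have hq : 0 ≤ (t+1) / f s := div_nonneg (by linarith) hfs.le
  have hxs : s ≤ x := by linarith
  have h1 : f s ≤ f x := hfmono hxs
  have hqx : (t+1) / f s ≤ x := by linarith
  have : (t+1) / f s * f s ≤ x * f x :=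
    mul_le_mul hqx h1 hfs.le (by linarith)
  rwa [div_mul_cancel₀ _ (ne_of_gt hfs)] at this

private lemma lintegral_prod_comp {Ω : Type} [MeasurableSpace Ω] (P : Measure Ω)
    [IsProbabilityMeasure P]
    {E : Type} (X : E → Ω → ℝ) (hmeas : ∀ e, Measurable (X e))
    (hindep : iIndepFun X P)
    (g : E → ℝ → ENNReal) (hg : ∀ e, Measurable (g e)) (s : Finset E) :
    ∫⁻ ω, ∏ e ∈ s, g e (X e ω) ∂P = ∏ e ∈ s, ∫⁻ ω, g e (X e ω) ∂P := by
  classical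
  have H : iIndepFun (fun e ω => g e (X e ω)) P :=
    hindep.comp _ (fun e => hg e)
  have hm : ∀ e, Measurable (fun ω => g e (X e ω)) := fun e => (hg e).comp (hmeas e)
  induction s using Finset.induction_on with
  | empty => simp
  | @insert a s ha ih =>
      simp only [Finset.prod_insert ha]
      rw [← ih]
      have hindep2 : IndepFun (fun ω => g a (X a ω)) (fun ω => ∏ e ∈ s, g e (X e ω)) P := by
        have := (H.indepFun_finset_prod_of_notMem hm ha).symm
        have heq : (∏ j ∈ s, fun ω => g j (X j ω)) = fun ω => ∏ e ∈ s, g e (X e ω) := by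
          funext ω; simp
        rwa [heq] at this
      exact lintegral_mul_eq_lintegral_mul_lintegral_of_indepFun'' (hm a).aemeasurable
        (Finset.measurable_prod s (fun e _ => hm e)).aemeasurable hindep2

private lemma mgf_bound {Ω : Type} [MeasurableSpace Ω] (P : Measure Ω) [IsProbabilityMeasure P]
    (Y : Ω → ℝ) (hY : Measurable Y)
    (M₀ : ℝ) (hM₀ : 0 < M₀) (f : ℝ → ℝ) (hfpos : ∀ x, 0 < f x)
    (htail : ∀ x : ℝ, M₀ ≤ x → (P {ω | x < Y ω}).toReal = Real.exp (-(x ^ 2 * f x)))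
    (t A : ℝ) (ht : 0 < t) (hAM : M₀ ≤ A)
    (hA : ∀ x, A ≤ x → t + 1 ≤ x * f x) :
    ∫⁻ ω, ENNReal.ofReal (Real.exp (t * Y ω)) ∂P
      ≤ ENNReal.ofReal (Real.exp (t * A + 3 * t + 2)) := by
  set Ej : ℕ → Set Ω := fun j => {ω | A + ((j : ℝ) + 1) ≤ Y ω} with hEj
  have hEjm : ∀ j, MeasurableSet (Ej j) := fun j => measurableSet_le measurable_const hY
  set cj : ℕ → ENNReal := fun j => ENNReal.ofReal (Real.exp (t * (A + (j : ℝ) + 2))) with hcj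
  -- pointwise bound
  have hpt : ∀ ω, ENNReal.ofReal (Real.exp (t * Y ω))
      ≤ ENNReal.ofReal (Real.exp (t * (A + 1)))
        + ∑' j, (Ej j).indicator (fun _ => cj j) ω := by
    intro ω
    rcases le_or_gt (Y ω) (A + 1) with h | h
    · refine le_add_of_le_of_nonneg ?_ (zero_le (α := ENNReal))
      exact ENNReal.ofReal_le_ofReal (Real.exp_le_exp.2 (by nlinarith))
    · have hd0 : (0:ℝ) ≤ Y ω - A := by linarith
      set n : ℕ := ⌊Y ω - A⌋₊ with hn
      have hn1 : 1 ≤ n := Nat.le_floor (by push_cast; linarith)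
      have hfl : (n : ℝ) ≤ Y ω - A := Nat.floor_le hd0
      have hfu : Y ω - A < n + 1 := Nat.lt_floor_add_one _
      set j : ℕ := n - 1 with hj
      have hjn : (j : ℝ) = (n : ℝ) - 1 := by
        have : ((n - 1 : ℕ) : ℝ) = (n : ℝ) - 1 := by
          push_cast [Nat.cast_sub hn1]; ring
        rw [hj, this]
      have hmem : ω ∈ Ej j := by
        simp only [hEj, Set.mem_setOf_eq, hjn]
        linarith
      have hle : ENNReal.ofReal (Real.exp (t * Y ω)) ≤ cj j := by
        apply ENNReal.ofReal_le_ofReal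
        apply Real.exp_le_exp.2
        have : Y ω ≤ A + (j : ℝ) + 2 := by rw [hjn]; linarith
        nlinarith
      calc ENNReal.ofReal (Real.exp (t * Y ω)) ≤ cj j := hle
        _ = (Ej j).indicator (fun _ => cj j) ω := by rw [Set.indicator_of_mem hmem]
        _ ≤ ∑' i, (Ej i).indicator (fun _ => cj i) ω := ENNReal.le_tsum j
        _ ≤ _ := le_add_self
  -- integrate
  have hint : ∫⁻ ω, ENNReal.ofReal (Real.exp (t * Y ω)) ∂P
      ≤ ENNReal.ofReal (Real.exp (t * (A + 1))) + ∑' j, cj j * P (Ej j) := by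
    calc ∫⁻ ω, ENNReal.ofReal (Real.exp (t * Y ω)) ∂P
        ≤ ∫⁻ ω, (ENNReal.ofReal (Real.exp (t * (A + 1)))
            + ∑' j, (Ej j).indicator (fun _ => cj j) ω) ∂P := lintegral_mono hpt
      _ = ENNReal.ofReal (Real.exp (t * (A + 1)))
            + ∫⁻ ω, ∑' j, (Ej j).indicator (fun _ => cj j) ω ∂P := by
          rw [lintegral_add_left measurable_const, lintegral_const, measure_univ, mul_one]
      _ = ENNReal.ofReal (Real.exp (t * (A + 1))) + ∑' j, cj j * P (Ej j) := by
          rw [lintegral_tsum (fun j => (measurable_const.indicator (hEjm j)).aemeasurable)]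
          congr 1
          refine tsum_congr fun j => ?_
          rw [lintegral_indicator_const (hEjm j)]
  -- bound each term
  have hterm : ∀ j : ℕ, cj j * P (Ej j) ≤ ENNReal.ofReal (Real.exp (2 * t - j)) := by
    intro j
    have hx : M₀ ≤ A + (j : ℝ) := by
      have : (0:ℝ) ≤ (j : ℝ) := Nat.cast_nonneg j
      linarith
    have hsub : Ej j ⊆ {ω | A + (j : ℝ) < Y ω} := by
      intro ω hω
      simp only [hEj, Set.mem_setOf_eq] at hω ⊢
      linarith
    have hPE : P (Ej j) ≤ ENNReal.ofReal (Real.exp (-((A + (j:ℝ)) ^ 2 * f (A + (j:ℝ))))) := by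
      have h1 : P (Ej j) ≤ P {ω | A + (j : ℝ) < Y ω} := measure_mono hsub
      have h2 : P {ω | A + (j : ℝ) < Y ω}
          = ENNReal.ofReal (Real.exp (-((A + (j:ℝ)) ^ 2 * f (A + (j:ℝ))))) := by
        rw [← htail (A + (j:ℝ)) hx, ENNReal.ofReal_toReal (measure_ne_top P _)]
      rw [← h2]; exact h1
    calc cj j * P (Ej j)
        ≤ ENNReal.ofReal (Real.exp (t * (A + (j:ℝ) + 2)))
          * ENNReal.ofReal (Real.exp (-((A + (j:ℝ)) ^ 2 * f (A + (j:ℝ))))) :=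
          mul_le_mul_right hPE _
      _ = ENNReal.ofReal (Real.exp (t * (A + (j:ℝ) + 2))
          * Real.exp (-((A + (j:ℝ)) ^ 2 * f (A + (j:ℝ))))) :=
          (ENNReal.ofReal_mul (Real.exp_nonneg _)).symm
      _ ≤ ENNReal.ofReal (Real.exp (2 * t - j)) := by
          apply ENNReal.ofReal_le_ofReal
          rw [← Real.exp_add]
          apply Real.exp_le_exp.2
          have hAj : A ≤ A + (j:ℝ) := by
            have : (0:ℝ) ≤ (j : ℝ) := Nat.cast_nonneg j
            linarith
          have h1 : t + 1 ≤ (A + (j:ℝ)) * f (A + (j:ℝ)) := hA _ hAj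
          have h2 : (A + (j:ℝ)) * (t + 1) ≤ (A + (j:ℝ)) ^ 2 * f (A + (j:ℝ)) := by
            have h0 : (0:ℝ) < A + (j:ℝ) := by
              have : (0:ℝ) ≤ (j : ℝ) := Nat.cast_nonneg j
              linarith
            nlinarith
          nlinarith [Nat.cast_nonneg (α := ℝ) j]
  -- sum the geometric series
  have h2e : (2:ℝ) ≤ Real.exp 1 := by
    have := Real.add_one_le_exp 1; linarith
  have hgeo : ∑' j : ℕ, ENNReal.ofReal (Real.exp (2 * t - j))
      ≤ ENNReal.ofReal (2 * Real.exp (2 * t)) := by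
    set r : ℝ := Real.exp (-1) with hr
    have hr0 : 0 ≤ r := Real.exp_nonneg _
    have hr1 : r < 1 := Real.exp_lt_one_iff.2 (by norm_num)
    have hrhalf : r ≤ 1/2 := by
      have h1 : r * Real.exp 1 = 1 := by
        rw [hr, ← Real.exp_add]; norm_num
      nlinarith [Real.exp_pos 1]
    have hexp : ∀ j : ℕ, Real.exp (2 * t - j) = Real.exp (2 * t) * r ^ j := by
      intro j
      rw [hr, ← Real.exp_nat_mul, ← Real.exp_add]
      ring_nf
    have hsummable : Summable (fun j : ℕ => Real.exp (2 * t) * r ^ j) :=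
      (summable_geometric_of_lt_one hr0 hr1).mul_left _
    calc ∑' j : ℕ, ENNReal.ofReal (Real.exp (2 * t - j))
        = ∑' j : ℕ, ENNReal.ofReal (Real.exp (2 * t) * r ^ j) := by
          refine tsum_congr fun j => by rw [hexp j]
      _ = ENNReal.ofReal (∑' j : ℕ, Real.exp (2 * t) * r ^ j) :=
          (ENNReal.ofReal_tsum_of_nonneg
            (fun j => mul_nonneg (Real.exp_nonneg _) (pow_nonneg hr0 _)) hsummable).symm
      _ ≤ ENNReal.ofReal (2 * Real.exp (2 * t)) := by
          apply ENNReal.ofReal_le_ofReal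
          rw [tsum_mul_left, tsum_geometric_of_lt_one hr0 hr1]
          have hinv : (1 - r)⁻¹ ≤ 2 := by
            rw [inv_le_comm₀ (by linarith) (by norm_num)]
            linarith
          have := Real.exp_nonneg (2 * t)
          nlinarith
  -- combine
  have hfinal : ENNReal.ofReal (Real.exp (t * (A + 1))) + ∑' j, cj j * P (Ej j)
      ≤ ENNReal.ofReal (Real.exp (t * A + 3 * t + 2)) := by
    have hsumle : ∑' j, cj j * P (Ej j) ≤ ENNReal.ofReal (2 * Real.exp (2 * t)) :=
      le_trans (ENNReal.tsum_le_tsum hterm) hgeo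
    calc ENNReal.ofReal (Real.exp (t * (A + 1))) + ∑' j, cj j * P (Ej j)
        ≤ ENNReal.ofReal (Real.exp (t * (A + 1))) + ENNReal.ofReal (2 * Real.exp (2 * t)) :=
          add_le_add (le_refl _) hsumle
      _ = ENNReal.ofReal (Real.exp (t * (A + 1)) + 2 * Real.exp (2 * t)) :=
          (ENNReal.ofReal_add (Real.exp_nonneg _)
            (by positivity)).symm
      _ ≤ ENNReal.ofReal (Real.exp (t * A + 3 * t + 2)) := by
          apply ENNReal.ofReal_le_ofReal
          have hMA : 0 < A := lt_of_lt_of_le hM₀ hAM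
          have e1 : Real.exp (t * (A + 1)) ≤ Real.exp (t * A + 3 * t) :=
            Real.exp_le_exp.2 (by nlinarith)
          have e2 : Real.exp (2 * t) ≤ Real.exp (t * A + 3 * t) :=
            Real.exp_le_exp.2 (by nlinarith)
          have e3 : Real.exp (t * A + 3 * t + 2)
              = Real.exp (t * A + 3 * t) * Real.exp 2 := by
            rw [← Real.exp_add]
          have h2e : (2:ℝ) ≤ Real.exp 1 := by
            have := Real.add_one_le_exp 1; linarith
          have e4 : (4:ℝ) ≤ Real.exp 2 := by
            have : Real.exp 2 = Real.exp 1 * Real.exp 1 := by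
              rw [← Real.exp_add]; norm_num
            nlinarith
          nlinarith [Real.exp_pos (t * A + 3 * t)]
  exact le_trans hint hfinal


set_option maxHeartbeats 2000000 in
/-- Proposition 4.1, claim 1.  Assume the negative-part
tail `P(X_e⁻ > x) = e^{-x² f(x)}` for `x ≥ M₀` with `f` positive increasing,
and `Σ_k 1/f(2^k) < ∞`.  Then for every `ε > 0` there are `ε₁ = ε₁(ε) > 0` and
`δ = 2^{-l}` with `Σ_{k=-log₂ δ}^∞ 2^{-k/2} ≤ ε₁/8`, such that
`P(⋃_{v ∈ I_{N+log₂ δ}} A(v)) ≤ e^{-C 2^{2N}}` for some `C = C(ε) > 0` not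
depending on `N`, for all `N` sufficiently large. -/
theorem stmt_18
    {Ω : Type} [MeasurableSpace Ω] (P : Measure Ω) [IsProbabilityMeasure P]
    {E : Type} (T : ℕ → Finset E)
    (hcard : ∀ k, (T k).card ≤ 2 ^ (2 * k + 1))
    (hdisj : ∀ k k', k ≠ k' → Disjoint (T k) (T k'))
    (X : E → Ω → ℝ)
    (hmeas : ∀ e, Measurable (X e))
    (hindep : iIndepFun X P)
    (hident : ∀ e e', Measure.map (X e) P = Measure.map (X e') P)
    (hmean : ∀ e, ∫ ω, X e ω ∂P = 0)
    (M₀ : ℝ) (hM₀ : 0 < M₀)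
    (f : ℝ → ℝ) (hfpos : ∀ x, 0 < f x) (hfmono : Monotone f)
    (htail : ∀ e, ∀ x : ℝ, M₀ ≤ x →
      (P {ω | x < max (-(X e ω)) 0}).toReal = Real.exp (-(x ^ 2 * f x)))
    (hsum : Summable (fun k : ℕ => 1 / f (2 ^ k))) :
    ∀ ε : ℝ, 0 < ε →
      ∃ ε₁ : ℝ, 0 < ε₁ ∧
      ∃ l : ℕ, 1 ≤ l ∧
        (∑' k : ℕ, (2 : ℝ) ^ (-(((l + k : ℕ) : ℝ)) / 2)) ≤ ε₁ / 8 ∧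
        ∃ C > (0 : ℝ), ∃ N₀ : ℕ, ∀ N : ℕ, N₀ ≤ N →
          (P (AunionEvent T X N l ε₁)).toReal ≤ Real.exp (-(C * 2 ^ (2 * N))) := by
  intro ε hε
  classical
  set S : ℝ := ∑' k : ℕ, 1 / f (2 ^ k) with hSdef
  have hS0 : 0 ≤ S := tsum_nonneg (fun k => div_nonneg zero_le_one (hfpos _).le)
  set K : ℝ := 2 * M₀ + 24 + 8 * S with hKdef
  have hK0 : 0 < K := by positivity
  set ε₁ : ℝ := K + 25 with hε₁def
  have hε₁pos : 0 < ε₁ := by positivity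
  have hε₁24 : 24 ≤ ε₁ := by simp only [hε₁def]; linarith
  refine ⟨ε₁, hε₁pos, 1, le_refl 1, ?_, 1, one_pos, 2, ?_⟩
  · -- the geometric tail sum constraint
    set r : ℝ := (2 : ℝ) ^ (-(1:ℝ)/2) with hrdef
    have hr0 : 0 ≤ r := Real.rpow_nonneg (by norm_num) _
    have hr1 : r < 1 := Real.rpow_lt_one_of_one_lt_of_neg one_lt_two (by norm_num)
    have hrsq : r * r = 1/2 := by
      rw [hrdef, ← Real.rpow_add (by norm_num : (0:ℝ) < 2)]
      norm_num
    have hr34 : r ≤ 3/4 := by nlinarith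
    have hterm : ∀ k : ℕ, (2 : ℝ) ^ (-(((1 + k : ℕ) : ℝ)) / 2) = r * r ^ k := by
      intro k
      have h1 : r ^ (1 + k) = (2:ℝ) ^ ((-(1:ℝ)/2) * ((1 + k : ℕ) : ℝ)) := by
        rw [hrdef, ← Real.rpow_natCast ((2:ℝ) ^ (-(1:ℝ)/2)) (1+k),
          ← Real.rpow_mul (by norm_num : (0:ℝ) ≤ 2)]
      have h2 : (-(1:ℝ)/2) * ((1 + k : ℕ) : ℝ) = -(((1 + k : ℕ) : ℝ)) / 2 := by ring
      rw [← pow_succ' r k, ← Nat.add_comm 1 k]  -- r * r^k = r^(1+k)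
      rw [h1, h2]
    calc (∑' k : ℕ, (2 : ℝ) ^ (-(((1 + k : ℕ) : ℝ)) / 2))
        = ∑' k : ℕ, r * r ^ k := tsum_congr hterm
      _ = r * (1 - r)⁻¹ := by rw [tsum_mul_left, tsum_geometric_of_lt_one hr0 hr1]
      _ ≤ 3 := by
          have h14 : (1:ℝ)/4 ≤ 1 - r := by linarith
          have hinv : (1 - r)⁻¹ ≤ 4 := by
            rw [inv_le_comm₀ (by linarith) (by norm_num)]
            linarith
          nlinarith
      _ ≤ ε₁ / 8 := by linarith

  · -- the main estimate
    intro N hN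
    have hn1 : 1 ≤ N - 1 := by omega
    set n : ℕ := N - 1 with hndef
    set lam : ℝ := (2:ℝ) ^ N with hlamdef
    have hlam0 : (0:ℝ) ≤ lam := by positivity
    set Sfun : Ω → ℝ := fun ω => ∑ k ∈ Finset.range n,
      (2:ℝ) ^ (-((k+1 : ℕ) : ℤ)) * Vneg T X (k+1) ω with hSfundef
    set G : Ω → ENNReal := fun ω => ENNReal.ofReal (Real.exp (lam * Sfun ω)) with hGdef
    -- step 1 : containment
    have hsub : AunionEvent T X N 1 ε₁ ⊆
        {ω | ENNReal.ofReal (Real.exp (lam * (ε₁ * (2:ℝ)^N))) ≤ G ω} := by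
      rintro ω ⟨v, hv, hB⟩
      have key : ε₁ * (2:ℝ)^N ≤ Sfun ω := by
        have h2 : ∀ k : Fin (N - 1),
            (2:ℝ)^(N:ℤ) * (2:ℝ)^(-(v k : ℤ))
              ≤ (2:ℝ)^(-((k.1+1 : ℕ) : ℤ)) * Vneg T X (k.1+1) ω := by
          intro k
          have h := (Set.mem_Ico.1 (hB k)).1
          rw [sub_eq_add_neg, zpow_add₀ (two_ne_zero (α := ℝ))] at h
          exact h
        calc ε₁ * (2:ℝ)^N ≤ (∑ k : Fin (N-1), (2:ℝ)^(-(v k : ℤ))) * (2:ℝ)^N :=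
              mul_le_mul_of_nonneg_right hv (by positivity)
          _ = ∑ k : Fin (N-1), (2:ℝ)^(N:ℤ) * (2:ℝ)^(-(v k : ℤ)) := by
              rw [Finset.sum_mul]
              refine Finset.sum_congr rfl (fun k _ => ?_)
              rw [zpow_natCast, mul_comm]
          _ ≤ ∑ k : Fin (N-1), (2:ℝ)^(-((k.1+1 : ℕ) : ℤ)) * Vneg T X (k.1+1) ω :=
              Finset.sum_le_sum (fun k _ => h2 k)
          _ = Sfun ω :=
              (Finset.sum_range (fun k => (2:ℝ) ^ (-((k+1 : ℕ) : ℤ)) * Vneg T X (k+1) ω)).symm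
      exact ENNReal.ofReal_le_ofReal (Real.exp_le_exp.2
        (mul_le_mul_of_nonneg_left key hlam0))
    -- measurability
    have hVmeas : ∀ k, Measurable (fun ω => Vneg T X k ω) := by
      intro k
      apply Finset.measurable_sum
      intro e _
      exact (hmeas e).neg.max measurable_const
    have hSmeas : Measurable Sfun := by
      apply Finset.measurable_sum
      intro k _
      exact (hVmeas (k+1)).const_mul _
    have hGmeas : Measurable G :=
      (Real.measurable_exp.comp (hSmeas.const_mul lam)).ennreal_ofReal
    -- step 2 : Markov
    have hmark := mul_meas_ge_le_lintegral₀ (μ := P) hGmeas.aemeasurable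
      (ENNReal.ofReal (Real.exp (lam * (ε₁ * (2:ℝ)^N))))
    -- step 3 : product structure
    set U : Finset E := (Finset.range n).biUnion (fun k => T (k+1)) with hUdef
    set tfun : E → ℝ := fun e => ∑ k ∈ Finset.range n,
        (if e ∈ T (k+1) then (2:ℝ)^(N-1-k) else 0) with htfundef
    have htfun : ∀ k ∈ Finset.range n, ∀ e ∈ T (k+1), tfun e = (2:ℝ)^(N-1-k) := by
      intro k hk e he
      simp only [htfundef]
      rw [Finset.sum_eq_single_of_mem k hk]
      · rw [if_pos he]
      · intro k' _ hne
        rw [if_neg]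
        intro he'
        exact (Finset.disjoint_left.1 (hdisj (k'+1) (k+1) (by omega)) he') he
    have hUdisj : (↑(Finset.range n) : Set ℕ).PairwiseDisjoint (fun k => T (k+1)) := by
      intro a _ b _ hab
      exact hdisj (a+1) (b+1) (by omega)
    have hz : ∀ k ∈ Finset.range n, lam * (2:ℝ)^(-((k+1 : ℕ) : ℤ)) = (2:ℝ)^(N-1-k) := by
      intro k hk
      have hkn : k < n := Finset.mem_range.1 hk
      rw [hlamdef, ← zpow_natCast (2:ℝ) N, ← zpow_add₀ (two_ne_zero (α := ℝ)),
        ← zpow_natCast (2:ℝ) (N-1-k)]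
      congr 1
      omega
    have hprod : ∀ ω, lam * Sfun ω = ∑ e ∈ U, tfun e * max (-(X e ω)) 0 := by
      intro ω
      rw [hUdef, Finset.sum_biUnion hUdisj, hSfundef, Finset.mul_sum]
      refine Finset.sum_congr rfl (fun k hk => ?_)
      rw [← mul_assoc, hz k hk]
      simp only [Vneg, Finset.mul_sum]
      exact Finset.sum_congr rfl (fun e he => by rw [htfun k hk e he])
    set g : E → ℝ → ENNReal :=
      fun e x => ENNReal.ofReal (Real.exp (tfun e * max (-x) 0)) with hgdef
    have hgmeas : ∀ e, Measurable (g e) := fun e =>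
      (Real.measurable_exp.comp
        ((measurable_neg.max measurable_const).const_mul _)).ennreal_ofReal
    have hGprod : ∀ ω, G ω = ∏ e ∈ U, g e (X e ω) := by
      intro ω
      rw [hGdef]
      simp only []
      rw [hprod ω, Real.exp_sum,
        ENNReal.ofReal_prod_of_nonneg (fun e _ => Real.exp_nonneg _)]
    have hlint : ∫⁻ ω, G ω ∂P = ∏ e ∈ U, ∫⁻ ω, g e (X e ω) ∂P := by
      rw [lintegral_congr (fun ω => hGprod ω)]
      exact lintegral_prod_comp P X hmeas hindep g hgmeas U
    -- step 4 : per-edge MGF bound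
    set bnd : E → ℝ := fun e =>
      tfun e * (M₀ + Real.sqrt (tfun e + 1) + (tfun e + 1) / f (Real.sqrt (tfun e + 1)))
        + 3 * tfun e + 2 with hbnddef
    have hedge : ∀ e ∈ U, ∫⁻ ω, g e (X e ω) ∂P ≤ ENNReal.ofReal (Real.exp (bnd e)) := by
      intro e heU
      obtain ⟨k, hk, he⟩ := Finset.mem_biUnion.1 heU
      have ht0 : 0 < tfun e := by rw [htfun k hk e he]; positivity
      have hAM : M₀ ≤ M₀ + Real.sqrt (tfun e + 1)
          + (tfun e + 1) / f (Real.sqrt (tfun e + 1)) := by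
        have h1 : 0 ≤ Real.sqrt (tfun e + 1) := Real.sqrt_nonneg _
        have h2 : 0 ≤ (tfun e + 1) / f (Real.sqrt (tfun e + 1)) :=
          div_nonneg (by linarith) (hfpos _).le
        linarith
      exact mgf_bound P (fun ω => max (-(X e ω)) 0) ((hmeas e).neg.max measurable_const)
        M₀ hM₀ f hfpos (htail e) (tfun e) _ ht0 hAM
        (Afun_spec M₀ hM₀ f hfpos hfmono (tfun e) ht0.le)
    have hprodbound : ∏ e ∈ U, ∫⁻ ω, g e (X e ω) ∂P
        ≤ ENNReal.ofReal (Real.exp (∑ e ∈ U, bnd e)) := by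
      calc ∏ e ∈ U, ∫⁻ ω, g e (X e ω) ∂P
          ≤ ∏ e ∈ U, ENNReal.ofReal (Real.exp (bnd e)) := Finset.prod_le_prod' hedge
        _ = ENNReal.ofReal (∏ e ∈ U, Real.exp (bnd e)) :=
            (ENNReal.ofReal_prod_of_nonneg (fun _ _ => Real.exp_nonneg _)).symm
        _ = ENNReal.ofReal (Real.exp (∑ e ∈ U, bnd e)) := by rw [Real.exp_sum]
    -- step 5 : arithmetic bound on the exponent
    have hsumbnd : ∑ e ∈ U, bnd e ≤ K * 2^(2*N) := by
      have hq2 : ∀ k ∈ Finset.range n, ∑ e ∈ T (k+1), bnd e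
          ≤ (2:ℝ)^(2*N) * ((M₀+4)*(1/2)^(n-1-k) + 4*(1/2)^((n-1-k)/2)
              + 4/f ((2:ℝ)^((n-1-k)/2))) := by
        intro k hk
        have hkn : k < n := Finset.mem_range.1 hk
        set j : ℕ := n - 1 - k with hjdef
        set q : ℕ := j / 2 with hqdef
        have htv : ∀ e ∈ T (k+1), tfun e = (2:ℝ)^(j+1) := by
          intro e he
          rw [htfun k hk e he]
          congr 1
          omega
        have hfq : 0 < f ((2:ℝ)^q) := hfpos _
        have hbndle : ∀ e ∈ T (k+1), bnd e
            ≤ (M₀+3) * (2:ℝ)^(j+1) + (2:ℝ)^(j+q+3)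
              + (2:ℝ)^(2*j+3)/f ((2:ℝ)^q) + 2 := by
          intro e he
          simp only [hbnddef]
          rw [htv e he]
          have hppos : (0:ℝ) < (2:ℝ)^(j+1) := by positivity
          have h1 : (1:ℝ) ≤ (2:ℝ)^(j+1) := one_le_pow₀ one_le_two
          have hub : Real.sqrt ((2:ℝ)^(j+1)+1) ≤ (2:ℝ)^(q+2) := by
            have hsq : ((2:ℝ)^(q+2))^2 = (2:ℝ)^(2*q+4) := by
              rw [← pow_mul]; congr 1; omega
            have h2 : ((2:ℝ)^(j+1)+1) ≤ ((2:ℝ)^(q+2))^2 := by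
              rw [hsq]
              have e1 : (2:ℝ)^(j+1) ≤ (2:ℝ)^(2*q+2) :=
                pow_le_pow_right₀ one_le_two (by omega)
              have e2 : (1:ℝ) ≤ (2:ℝ)^(2*q+2) := one_le_pow₀ one_le_two
              have e3 : (2:ℝ)^(2*q+4) = (2:ℝ)^(2*q+2) * 4 := by
                rw [show 2*q+4 = (2*q+2)+2 by omega, pow_add]; norm_num
              nlinarith
            calc Real.sqrt ((2:ℝ)^(j+1)+1) ≤ Real.sqrt (((2:ℝ)^(q+2))^2) :=
                  Real.sqrt_le_sqrt h2
              _ = (2:ℝ)^(q+2) := Real.sqrt_sq (by positivity)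
          have hlb : (2:ℝ)^q ≤ Real.sqrt ((2:ℝ)^(j+1)+1) := by
            apply Real.le_sqrt_of_sq_le
            have hsq : ((2:ℝ)^q)^2 = (2:ℝ)^(2*q) := by rw [← pow_mul]; congr 1; omega
            rw [hsq]
            have : (2:ℝ)^(2*q) ≤ (2:ℝ)^(j+1) := pow_le_pow_right₀ one_le_two (by omega)
            linarith
          have hflb : f ((2:ℝ)^q) ≤ f (Real.sqrt ((2:ℝ)^(j+1)+1)) := hfmono hlb
          have hdiv : ((2:ℝ)^(j+1)+1) / f (Real.sqrt ((2:ℝ)^(j+1)+1))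
              ≤ (2:ℝ)^(j+2) / f ((2:ℝ)^q) := by
            apply div_le_div₀ (by positivity) ?_ hfq hflb
            have h2 : (2:ℝ)^(j+2) = (2:ℝ)^(j+1) * 2 := by rw [pow_succ]
            linarith
          have hm1 : (2:ℝ)^(j+1) * (2:ℝ)^(q+2) = (2:ℝ)^(j+q+3) := by
            rw [← pow_add]; congr 1; omega
          have hm2 : (2:ℝ)^(j+1) * (2:ℝ)^(j+2) = (2:ℝ)^(2*j+3) := by
            rw [← pow_add]; congr 1; omega
          have hs1 : (2:ℝ)^(j+1) * Real.sqrt ((2:ℝ)^(j+1)+1) ≤ (2:ℝ)^(j+q+3) := by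
            rw [← hm1]
            exact mul_le_mul_of_nonneg_left hub hppos.le
          have hs2 : (2:ℝ)^(j+1) * (((2:ℝ)^(j+1)+1) / f (Real.sqrt ((2:ℝ)^(j+1)+1)))
              ≤ (2:ℝ)^(2*j+3)/f ((2:ℝ)^q) := by
            calc (2:ℝ)^(j+1) * (((2:ℝ)^(j+1)+1) / f (Real.sqrt ((2:ℝ)^(j+1)+1)))
                ≤ (2:ℝ)^(j+1) * ((2:ℝ)^(j+2) / f ((2:ℝ)^q)) :=
                  mul_le_mul_of_nonneg_left hdiv hppos.le
              _ = (2:ℝ)^(2*j+3)/f ((2:ℝ)^q) := by rw [← hm2]; ring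
          nlinarith [hs1, hs2]
        have hcardk : ((T (k+1)).card : ℝ) ≤ (2:ℝ)^(2*k+3) := by
          calc ((T (k+1)).card : ℝ) ≤ ((2^(2*(k+1)+1) : ℕ) : ℝ) := by
                exact_mod_cast hcard (k+1)
            _ = (2:ℝ)^(2*(k+1)+1) := by norm_cast
            _ = (2:ℝ)^(2*k+3) := by rw [show 2*(k+1)+1 = 2*k+3 from by omega]
        have hBpos : (0:ℝ) ≤ (M₀+3) * (2:ℝ)^(j+1) + (2:ℝ)^(j+q+3)
            + (2:ℝ)^(2*j+3)/f ((2:ℝ)^q) + 2 := by positivity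
        calc ∑ e ∈ T (k+1), bnd e
            ≤ ∑ _e ∈ T (k+1), ((M₀+3) * (2:ℝ)^(j+1) + (2:ℝ)^(j+q+3)
              + (2:ℝ)^(2*j+3)/f ((2:ℝ)^q) + 2) := Finset.sum_le_sum hbndle
          _ = ((T (k+1)).card : ℝ) * ((M₀+3) * (2:ℝ)^(j+1) + (2:ℝ)^(j+q+3)
              + (2:ℝ)^(2*j+3)/f ((2:ℝ)^q) + 2) := by
              rw [Finset.sum_const, nsmul_eq_mul]
          _ ≤ (2:ℝ)^(2*k+3) * ((M₀+3) * (2:ℝ)^(j+1) + (2:ℝ)^(j+q+3)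
              + (2:ℝ)^(2*j+3)/f ((2:ℝ)^q) + 2) :=
              mul_le_mul_of_nonneg_right hcardk hBpos
          _ ≤ (2:ℝ)^(2*N) * ((M₀+4)*(1/2)^j + 4*(1/2)^q + 4/f ((2:ℝ)^q)) := by
              have hjk : 2*k + 2*j + 4 = 2*N := by omega
              have e1 : (2:ℝ)^(2*k+3) * (2:ℝ)^(j+1) ≤ (2:ℝ)^(2*N) * (1/2)^j := by
                have h : (2:ℝ)^(2*k+3) * (2:ℝ)^(j+1) = (2:ℝ)^(2*k+j+4) := by
                  rw [← pow_add]; congr 1; omega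
                rw [h]; exact pow2_le _ _ _ (by omega)
              have e2 : (2:ℝ)^(2*k+3) * (2:ℝ)^(j+q+3) ≤ (2:ℝ)^(2*N) * (4*(1/2)^q) := by
                have h : (2:ℝ)^(2*k+3) * (2:ℝ)^(j+q+3) = (2:ℝ)^(2*k+j+q+6) := by
                  rw [← pow_add]; congr 1; omega
                have h2 : (2:ℝ)^(2*k+j+q+6) ≤ (2:ℝ)^(2*N+2) * (1/2)^q :=
                  pow2_le _ _ _ (by omega)
                have h3 : (2:ℝ)^(2*N+2) = (2:ℝ)^(2*N) * 4 := by rw [pow_add]; norm_num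
                rw [h]
                refine le_trans h2 (le_of_eq ?_)
                rw [h3]; ring
              have e3 : (2:ℝ)^(2*k+3) * (2:ℝ)^(2*j+3) = (2:ℝ)^(2*N+2) := by
                rw [← pow_add]; congr 1; omega
              have e4 : (2:ℝ)^(2*k+3) * 2 ≤ (2:ℝ)^(2*N) * (1/2)^j := by
                have h : (2:ℝ)^(2*k+3) * 2 = (2:ℝ)^(2*k+4) := by rw [← pow_succ]
                rw [h]; exact pow2_le _ _ _ (by omega)
              have expand : (2:ℝ)^(2*k+3) * ((M₀+3) * (2:ℝ)^(j+1) + (2:ℝ)^(j+q+3)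
                  + (2:ℝ)^(2*j+3)/f ((2:ℝ)^q) + 2)
                  = (M₀+3) * ((2:ℝ)^(2*k+3) * (2:ℝ)^(j+1))
                    + (2:ℝ)^(2*k+3) * (2:ℝ)^(j+q+3)
                    + ((2:ℝ)^(2*k+3) * (2:ℝ)^(2*j+3))/f ((2:ℝ)^q)
                    + (2:ℝ)^(2*k+3) * 2 := by ring
              rw [expand, e3]
              have t3 : (2:ℝ)^(2*N+2)/f ((2:ℝ)^q) = (2:ℝ)^(2*N) * (4/f ((2:ℝ)^q)) := by
                rw [show 2*N+2 = (2*N)+2 by omega, pow_add]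
                ring
              rw [t3]
              have hM3 : (0:ℝ) ≤ M₀ + 3 := by linarith
              have t1 := mul_le_mul_of_nonneg_left e1 hM3
              have goal_eq : (2:ℝ)^(2*N) * ((M₀+4)*(1/2)^j + 4*(1/2)^q + 4/f ((2:ℝ)^q))
                  = (M₀+3) * ((2:ℝ)^(2*N) * (1/2)^j) + (2:ℝ)^(2*N) * (4*(1/2)^q)
                    + (2:ℝ)^(2*N) * (4/f ((2:ℝ)^q)) + (2:ℝ)^(2*N) * (1/2)^j := by ring
              rw [goal_eq]
              exact add_le_add (add_le_add (add_le_add t1 e2) (le_refl _)) e4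
      calc ∑ e ∈ U, bnd e
          = ∑ k ∈ Finset.range n, ∑ e ∈ T (k+1), bnd e := by
            rw [hUdef]; exact Finset.sum_biUnion hUdisj
        _ ≤ ∑ k ∈ Finset.range n, (2:ℝ)^(2*N) * ((M₀+4)*(1/2)^(n-1-k)
              + 4*(1/2)^((n-1-k)/2) + 4/f ((2:ℝ)^((n-1-k)/2))) := Finset.sum_le_sum hq2
        _ = (2:ℝ)^(2*N) * ∑ k ∈ Finset.range n, ((M₀+4)*(1/2)^(n-1-k)
              + 4*(1/2)^((n-1-k)/2) + 4/f ((2:ℝ)^((n-1-k)/2))) := by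
            rw [Finset.mul_sum]
        _ ≤ (2:ℝ)^(2*N) * (2*(M₀+4) + 4*4 + 4*(2*S)) := by
            apply mul_le_mul_of_nonneg_left ?_ (by positivity)
            rw [Finset.sum_add_distrib, Finset.sum_add_distrib]
            have hA : ∑ k ∈ Finset.range n, (M₀+4)*(1/2:ℝ)^(n-1-k) ≤ 2*(M₀+4) := by
              rw [← Finset.mul_sum]
              have hrefl := Finset.sum_range_reflect (fun i => (1/2:ℝ)^i) n
              rw [hrefl]
              have := sum_geometric_two_le n
              have hM4 : (0:ℝ) ≤ M₀ + 4 := by linarith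
              nlinarith
            have hB : ∑ k ∈ Finset.range n, 4*(1/2:ℝ)^((n-1-k)/2) ≤ 4*4 := by
              rw [← Finset.mul_sum]
              have hrefl := Finset.sum_range_reflect (fun i => (1/2:ℝ)^(i/2)) n
              rw [hrefl]
              have h1 : ∑ i ∈ Finset.range n, (1/2:ℝ)^(i/2)
                  ≤ 2 * ∑ m ∈ Finset.range n, (1/2:ℝ)^m :=
                sum_half_index (fun m => by positivity) n
              have h2 := sum_geometric_two_le n
              nlinarith
            have hC : ∑ k ∈ Finset.range n, 4/f ((2:ℝ)^((n-1-k)/2)) ≤ 4*(2*S) := by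
              have hco : ∀ k ∈ Finset.range n,
                  4/f ((2:ℝ)^((n-1-k)/2)) = 4*(1/f ((2:ℝ)^((n-1-k)/2))) := by
                intro k _; rw [mul_one_div]
              rw [Finset.sum_congr rfl hco, ← Finset.mul_sum]
              have hrefl := Finset.sum_range_reflect (fun i => 1/f ((2:ℝ)^(i/2))) n
              rw [hrefl]
              have h1 : ∑ i ∈ Finset.range n, 1/f ((2:ℝ)^(i/2))
                  ≤ 2 * ∑ m ∈ Finset.range n, 1/f ((2:ℝ)^m) :=
                sum_half_index (fun m => div_nonneg zero_le_one (hfpos _).le) n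
              have h2 : ∑ m ∈ Finset.range n, 1/f ((2:ℝ)^m) ≤ S := by
                rw [hSdef]
                exact Summable.sum_le_tsum (Finset.range n)
                  (fun i _ => div_nonneg zero_le_one (hfpos _).le) hsum
              nlinarith
            linarith
        _ = K * 2^(2*N) := by rw [hKdef]; ring
    -- step 6 : conclusion
    have hchain : ENNReal.ofReal (Real.exp (lam * (ε₁ * (2:ℝ)^N)))
        * P {ω | ENNReal.ofReal (Real.exp (lam * (ε₁ * (2:ℝ)^N))) ≤ G ω}
        ≤ ENNReal.ofReal (Real.exp (K * 2^(2*N))) := by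
      calc ENNReal.ofReal (Real.exp (lam * (ε₁ * (2:ℝ)^N)))
          * P {ω | ENNReal.ofReal (Real.exp (lam * (ε₁ * (2:ℝ)^N))) ≤ G ω}
          ≤ ∫⁻ ω, G ω ∂P := hmark
        _ = ∏ e ∈ U, ∫⁻ ω, g e (X e ω) ∂P := hlint
        _ ≤ ENNReal.ofReal (Real.exp (∑ e ∈ U, bnd e)) := hprodbound
        _ ≤ ENNReal.ofReal (Real.exp (K * 2^(2*N))) :=
            ENNReal.ofReal_le_ofReal (Real.exp_le_exp.2 hsumbnd)
    have hexp_eq : lam * (ε₁ * (2:ℝ)^N) = ε₁ * 2^(2*N) := by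
      rw [hlamdef, two_mul, pow_add]; ring
    have hc0 : ENNReal.ofReal (Real.exp (lam * (ε₁ * (2:ℝ)^N))) ≠ 0 :=
      ne_of_gt (ENNReal.ofReal_pos.2 (Real.exp_pos _))
    have hEv : P {ω | ENNReal.ofReal (Real.exp (lam * (ε₁ * (2:ℝ)^N))) ≤ G ω}
        ≤ ENNReal.ofReal (Real.exp (K * 2^(2*N) - ε₁ * 2^(2*N))) := by
      have heq : ENNReal.ofReal (Real.exp (K * 2^(2*N)))
          = ENNReal.ofReal (Real.exp (lam * (ε₁ * (2:ℝ)^N)))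
            * ENNReal.ofReal (Real.exp (K * 2^(2*N) - ε₁ * 2^(2*N))) := by
        rw [← ENNReal.ofReal_mul (Real.exp_nonneg _), ← Real.exp_add, hexp_eq]
        congr 2
        ring
      rw [heq] at hchain
      exact (ENNReal.mul_le_mul_iff_right hc0 ENNReal.ofReal_ne_top).1 hchain
    refine ENNReal.toReal_le_of_le_ofReal (Real.exp_nonneg _) ?_
    calc P (AunionEvent T X N 1 ε₁)
        ≤ P {ω | ENNReal.ofReal (Real.exp (lam * (ε₁ * (2:ℝ)^N))) ≤ G ω} :=
          measure_mono hsub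
      _ ≤ ENNReal.ofReal (Real.exp (K * 2^(2*N) - ε₁ * 2^(2*N))) := hEv
      _ ≤ ENNReal.ofReal (Real.exp (-(1 * 2^(2*N)))) := by
          apply ENNReal.ofReal_le_ofReal
          apply Real.exp_le_exp.2
          have hx : (0:ℝ) < 2^(2*N) := by positivity
          rw [hε₁def]
          nlinarith
end
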